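/- Let Σ be a symmetric d×d matrix with ‖I − Σ‖_op ≤ ε for some ε ∈ (0, 1), let θ⋆ ∈ ℝ^d with ‖θ⋆‖ = 1, and let 0 < L < 1. Then every minimizer θ_n of the quadratic form (θ − θ⋆)ᵀ Σ (θ − θ⋆) over the ball {θ : ‖θ‖ ≤ L} satisfies ‖θ_n − L θ⋆‖² ≤ 118 ε². -/

import Mathlib

open Matrix
open scoped RealInnerProductSpace

/-- The `ℓ²`-operator (spectral) norm of a square real matrix. -/
noncomputable def l2OpNorm {d : ℕ} (A : Matrix (Fin d) (Fin d) ℝ) : ℝ :=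
  ‖Matrix.toEuclideanCLM (𝕜 := ℝ) A‖

lemma my_dot_self_nonneg {d : ℕ} (x : Fin d → ℝ) : 0 ≤ x ⬝ᵥ x :=
  Finset.sum_nonneg fun i _ => mul_self_nonneg _

lemma my_dot_mulVec_le {d : ℕ} (A : Matrix (Fin d) (Fin d) ℝ) (x y : Fin d → ℝ) :
    x ⬝ᵥ (A *ᵥ y) ≤ l2OpNorm A * (Real.sqrt (x ⬝ᵥ x) * Real.sqrt (y ⬝ᵥ y)) := by
  set x' : EuclideanSpace ℝ (Fin d) := (WithLp.equiv 2 (Fin d → ℝ)).symm x with hx'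
  set y' : EuclideanSpace ℝ (Fin d) := (WithLp.equiv 2 (Fin d → ℝ)).symm y with hy'
  have hnx : ‖x'‖ = Real.sqrt (x ⬝ᵥ x) := by
    rw [EuclideanSpace.norm_eq]
    congr 1
    simp [hx', dotProduct, Real.norm_eq_abs, sq_abs, sq]
  have hny : ‖y'‖ = Real.sqrt (y ⬝ᵥ y) := by
    rw [EuclideanSpace.norm_eq]
    congr 1
    simp [hy', dotProduct, Real.norm_eq_abs, sq_abs, sq]
  have happ : Matrix.toEuclideanCLM (𝕜 := ℝ) A y' =
      (WithLp.equiv 2 (Fin d → ℝ)).symm (A *ᵥ y) :=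
    Matrix.toEuclideanCLM_toLp A y
  have hinner : x ⬝ᵥ (A *ᵥ y) = ⟪x', Matrix.toEuclideanCLM (𝕜 := ℝ) A y'⟫ := by
    rw [happ]
    simp [hx', PiLp.inner_apply, dotProduct, RCLike.inner_apply, WithLp.equiv_symm_apply, mul_comm]
  rw [hinner]
  calc ⟪x', Matrix.toEuclideanCLM (𝕜 := ℝ) A y'⟫
      ≤ ‖x'‖ * ‖Matrix.toEuclideanCLM (𝕜 := ℝ) A y'‖ := real_inner_le_norm _ _
    _ ≤ ‖x'‖ * (‖Matrix.toEuclideanCLM (𝕜 := ℝ) A‖ * ‖y'‖) := by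
        gcongr; exact ContinuousLinearMap.le_opNorm _ _
    _ = l2OpNorm A * (Real.sqrt (x ⬝ᵥ x) * Real.sqrt (y ⬝ᵥ y)) := by
        rw [hnx, hny, l2OpNorm]; ring

set_option maxHeartbeats 1000000 in
theorem constrained_minimizer_perturbation
    (d : ℕ) (hd : 1 ≤ d)
    (S : Matrix (Fin d) (Fin d) ℝ) (hS_symm : S.IsSymm)
    (ε : ℝ) (hε0 : 0 < ε) (hε1 : ε < 1)
    (hS_close : l2OpNorm ((1 : Matrix (Fin d) (Fin d) ℝ) - S) ≤ ε)
    (θstar : Fin d → ℝ) (hθstar : Real.sqrt (θstar ⬝ᵥ θstar) = 1)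
    (L : ℝ) (hL0 : 0 < L) (hL1 : L < 1)
    (θn : Fin d → ℝ)
    (hθn_feas : Real.sqrt (θn ⬝ᵥ θn) ≤ L)
    (hθn_min : ∀ θ : Fin d → ℝ, Real.sqrt (θ ⬝ᵥ θ) ≤ L →
      (θn - θstar) ⬝ᵥ (S *ᵥ (θn - θstar)) ≤ (θ - θstar) ⬝ᵥ (S *ᵥ (θ - θstar))) :
    (θn - L • θstar) ⬝ᵥ (θn - L • θstar) ≤ 118 * ε ^ 2 := by
  set E : Matrix (Fin d) (Fin d) ℝ := (1 : Matrix (Fin d) (Fin d) ℝ) - S with hE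
  have hSE : S = 1 - E := by rw [hE, sub_sub_cancel]
  set w : Fin d → ℝ := θn - L • θstar with hw
  -- basic norm facts
  have hθθ : θstar ⬝ᵥ θstar = 1 := by
    have := Real.sq_sqrt (my_dot_self_nonneg θstar)
    rw [hθstar] at this; linarith [this]
  have hθn2 : θn ⬝ᵥ θn ≤ L ^ 2 := by
    have := Real.sq_sqrt (my_dot_self_nonneg θn)
    nlinarith [Real.sqrt_nonneg (θn ⬝ᵥ θn)]
  -- feasibility of L • θstar
  have hfeas : Real.sqrt ((L • θstar) ⬝ᵥ (L • θstar)) ≤ L := by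
    have : (L • θstar) ⬝ᵥ (L • θstar) = L ^ 2 := by
      rw [smul_dotProduct, dotProduct_smul, hθθ, smul_eq_mul, smul_eq_mul]; ring
    rw [this, Real.sqrt_sq hL0.le]
  have hmin := hθn_min (L • θstar) hfeas
  -- rewrite the minimality in terms of w
  have hsub1 : θn - θstar = w + (L - 1) • θstar := by
    rw [hw]; ext i; simp; ring
  have hsub2 : L • θstar - θstar = (L - 1) • θstar := by
    ext i; simp; ring
  -- symmetry of S acting in dot products
  have hsymm : ∀ a b : Fin d → ℝ, a ⬝ᵥ (S *ᵥ b) = b ⬝ᵥ (S *ᵥ a) := by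
    intro a b
    rw [Matrix.dotProduct_mulVec, ← Matrix.mulVec_transpose, hS_symm.eq,
      dotProduct_comm]
  have hkey : w ⬝ᵥ (S *ᵥ w) + 2 * (L - 1) * (w ⬝ᵥ (S *ᵥ θstar)) ≤ 0 := by
    rw [hsub1, hsub2] at hmin
    have hexp : (w + (L - 1) • θstar) ⬝ᵥ (S *ᵥ (w + (L - 1) • θstar)) =
        w ⬝ᵥ (S *ᵥ w) + 2 * (L - 1) * (w ⬝ᵥ (S *ᵥ θstar)) +
          (L - 1) ^ 2 * (θstar ⬝ᵥ (S *ᵥ θstar)) := by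
      rw [Matrix.mulVec_add, Matrix.mulVec_smul]
      simp only [add_dotProduct, dotProduct_add,
        smul_dotProduct, dotProduct_smul, smul_eq_mul]
      rw [hsymm θstar w]
      ring
    have hexp2 : ((L - 1) • θstar) ⬝ᵥ (S *ᵥ ((L - 1) • θstar)) =
        (L - 1) ^ 2 * (θstar ⬝ᵥ (S *ᵥ θstar)) := by
      rw [Matrix.mulVec_smul]
      simp only [smul_dotProduct, dotProduct_smul, smul_eq_mul]
      ring
    rw [hexp, hexp2] at hmin
    linarith
  -- scalar abbreviations
  set W : ℝ := Real.sqrt (w ⬝ᵥ w) with hW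
  have hWnn : 0 ≤ W := Real.sqrt_nonneg _
  have hW2 : W ^ 2 = w ⬝ᵥ w := Real.sq_sqrt (my_dot_self_nonneg w)
  -- bounds from the operator norm
  have hEww : w ⬝ᵥ (E *ᵥ w) ≤ ε * W ^ 2 := by
    have := my_dot_mulVec_le E w w
    have h2 : l2OpNorm E * (W * W) ≤ ε * (W * W) := by
      apply mul_le_mul_of_nonneg_right hS_close (by positivity)
    nlinarith
  have hEwθ : w ⬝ᵥ (E *ᵥ θstar) ≤ ε * W := by
    have := my_dot_mulVec_le E w θstar
    rw [hθstar] at this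
    have h2 : l2OpNorm E * (W * 1) ≤ ε * (W * 1) := by
      apply mul_le_mul_of_nonneg_right hS_close (by positivity)
    nlinarith
  -- expand S = 1 - E in hkey
  have hIw : w ⬝ᵥ ((1 : Matrix (Fin d) (Fin d) ℝ) *ᵥ w) = w ⬝ᵥ w := by
    rw [Matrix.one_mulVec]
  have hIθ : w ⬝ᵥ ((1 : Matrix (Fin d) (Fin d) ℝ) *ᵥ θstar) = w ⬝ᵥ θstar := by
    rw [Matrix.one_mulVec]
  have hkey2 : w ⬝ᵥ w - w ⬝ᵥ (E *ᵥ w) +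
      2 * (L - 1) * (w ⬝ᵥ θstar - w ⬝ᵥ (E *ᵥ θstar)) ≤ 0 := by
    have e1 : w ⬝ᵥ (S *ᵥ w) = w ⬝ᵥ w - w ⬝ᵥ (E *ᵥ w) := by
      rw [hSE, Matrix.sub_mulVec, dotProduct_sub, hIw]
    have e2 : w ⬝ᵥ (S *ᵥ θstar) = w ⬝ᵥ θstar - w ⬝ᵥ (E *ᵥ θstar) := by
      rw [hSE, Matrix.sub_mulVec, dotProduct_sub, hIθ]
    rw [e1, e2] at hkey
    exact hkey
  -- relation between w ⬝ᵥ θstar and W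
  have hs : w ⬝ᵥ θstar = θstar ⬝ᵥ θn - L := by
    rw [hw, sub_dotProduct, smul_dotProduct, hθθ,
      dotProduct_comm]
    simp
  have hwθn : w ⬝ᵥ w ≤ 2 * L * (L - θstar ⬝ᵥ θn) := by
    have : w ⬝ᵥ w = θn ⬝ᵥ θn - 2 * L * (θstar ⬝ᵥ θn) + L ^ 2 := by
      rw [hw]
      simp only [sub_dotProduct, dotProduct_sub,
        smul_dotProduct, dotProduct_smul, smul_eq_mul, hθθ]
      rw [dotProduct_comm θn θstar]
      ring
    nlinarith
  -- combine everything
  set s : ℝ := L - θstar ⬝ᵥ θn with hsdef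
  have hEwθ' : -(w ⬝ᵥ (E *ᵥ θstar)) ≤ ε * W := by
    have h := my_dot_mulVec_le E (-w) θstar
    rw [neg_dotProduct, neg_dotProduct, dotProduct_neg, neg_neg,
      hθstar] at h
    have h2 : l2OpNorm E * (W * 1) ≤ ε * (W * 1) :=
      mul_le_mul_of_nonneg_right hS_close (by positivity)
    nlinarith
  have hkey3 : W ^ 2 + 2 * (1 - L) * s ≤ ε * W ^ 2 + 2 * (1 - L) * (ε * W) := by
    have h1 : w ⬝ᵥ θstar = -s := by rw [hs, hsdef]; ring
    rw [h1] at hkey2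
    have hL' : (0:ℝ) ≤ 1 - L := by linarith
    have hA := mul_le_mul_of_nonneg_left hEwθ' hL'
    linarith [hkey2, hEww, hW2, hA]
  have hsW : W ^ 2 ≤ 2 * L * s := by rw [hW2]; exact hwθn
  -- deduce W ≤ 2 L ε, hence W² ≤ 4 ε² ≤ 118 ε²
  have hLε1 : L * ε < 1 := by nlinarith
  have hWle : W ≤ 2 * L * ε := by
    rcases eq_or_lt_of_le hWnn with hW0 | hWpos
    · nlinarith
    · have h4 : (1 - L) * (W ^ 2) ≤ (1 - L) * (2 * L * s) :=
        mul_le_mul_of_nonneg_left hsW (by linarith)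
      have h5 : L * (W ^ 2 + 2 * (1 - L) * s) ≤ L * (ε * W ^ 2 + 2 * (1 - L) * (ε * W)) :=
        mul_le_mul_of_nonneg_left hkey3 hL0.le
      have h6 : (1 - L * ε) * W * W ≤ (2 * L * (1 - L) * ε) * W := by nlinarith [h4, h5]
      have h7 : (1 - L * ε) * W ≤ 2 * L * (1 - L) * ε :=
        le_of_mul_le_mul_right (by nlinarith [h6]) hWpos
      have h8 : 2 * L * (1 - L) * ε ≤ (1 - L * ε) * (2 * L * ε) := by
        nlinarith [mul_pos (mul_pos hL0 hL0) (mul_pos hε0 (by linarith : (0:ℝ) < 1 - ε))]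
      have h9 : (1 - L * ε) * W ≤ (1 - L * ε) * (2 * L * ε) := le_trans h7 h8
      exact le_of_mul_le_mul_left h9 (by linarith)
  calc (θn - L • θstar) ⬝ᵥ (θn - L • θstar) = W ^ 2 := hW2.symm
    _ ≤ (2 * L * ε) ^ 2 := by nlinarith
    _ ≤ 118 * ε ^ 2 := by
        have hL2 : L ^ 2 ≤ 1 := by nlinarith
        have := mul_le_mul_of_nonneg_right hL2 (sq_nonneg ε)
        nlinarith [this]
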